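/- Let S₁,…,Sₙ be axis-parallel closed squares with side lengths s₁,…,sₙ > 0, contained in the unit square U = [0,1]², with pairwise disjoint interiors, and suppose each Sᵢ intersects the topological frontier of U. Then ∑ᵢ sᵢ ≤ 4. (Instance of Proposition 3: since the unit square is parallel to an axis-parallel square, each boundary-touching square has a full side on the boundary of U, and these sides have pairwise disjoint relative interiors.) -/

import Mathlib

open MeasureTheory Metric Set

/-- The axis-parallel closed square `[a, a+s] × [b, b+s] ⊆ ℝ²`. -/
def axisSquare (a b s : ℝ) : Set (EuclideanSpace ℝ (Fin 2)) :=
  {p | p 0 ∈ Set.Icc a (a + s) ∧ p 1 ∈ Set.Icc b (b + s)}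

/-- The unit square `[0,1]² ⊆ ℝ²`. -/
def unitSquare : Set (EuclideanSpace ℝ (Fin 2)) := axisSquare 0 0 1

noncomputable def sqPt (x y : ℝ) : EuclideanSpace ℝ (Fin 2) :=
  (WithLp.equiv 2 (Fin 2 → ℝ)).symm ![x, y]

lemma sqPt_zero (x y : ℝ) : sqPt x y 0 = x := by simp [sqPt]
lemma sqPt_one (x y : ℝ) : sqPt x y 1 = y := by simp [sqPt]

lemma mem_interior_axisSquare {a b s : ℝ} {p : EuclideanSpace ℝ (Fin 2)}
    (h0 : p 0 ∈ Set.Ioo a (a + s)) (h1 : p 1 ∈ Set.Ioo b (b + s)) :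
    p ∈ interior (axisSquare a b s) := by
  have hopen : IsOpen ((fun q : EuclideanSpace ℝ (Fin 2) => q 0) ⁻¹' Set.Ioo a (a + s) ∩
      (fun q : EuclideanSpace ℝ (Fin 2) => q 1) ⁻¹' Set.Ioo b (b + s)) :=
    ((isOpen_Ioo.preimage ((continuous_apply 0).comp (PiLp.continuous_ofLp 2 _))).inter (isOpen_Ioo.preimage ((continuous_apply 1).comp (PiLp.continuous_ofLp 2 _))))
  have hsub : ((fun q : EuclideanSpace ℝ (Fin 2) => q 0) ⁻¹' Set.Ioo a (a + s) ∩
      (fun q : EuclideanSpace ℝ (Fin 2) => q 1) ⁻¹' Set.Ioo b (b + s)) ⊆ axisSquare a b s := by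
    rintro q ⟨hq0, hq1⟩
    exact ⟨Set.Ioo_subset_Icc_self hq0, Set.Ioo_subset_Icc_self hq1⟩
  exact interior_maximal hsub hopen ⟨h0, h1⟩

/-- sum of lengths of pairwise-disjoint open intervals inside `[0,1]` is at most 1. -/
lemma interval_sum_le_one {n : ℕ} (T : Finset (Fin n)) (x w : Fin n → ℝ)
    (hw : ∀ i, 0 < w i)
    (hx : ∀ i ∈ T, 0 ≤ x i ∧ x i + w i ≤ 1)
    (hd : ∀ i ∈ T, ∀ j ∈ T, i ≠ j →
      Disjoint (Set.Ioo (x i) (x i + w i)) (Set.Ioo (x j) (x j + w j))) :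
    ∑ i ∈ T, w i ≤ 1 := by
  have hmeas : volume (⋃ i ∈ T, Set.Ioo (x i) (x i + w i)) =
      ∑ i ∈ T, volume (Set.Ioo (x i) (x i + w i)) := by
    refine measure_biUnion_finset ?_ (fun i _ => measurableSet_Ioo)
    intro i hi j hj hij
    exact hd i hi j hj hij
  have hsub : (⋃ i ∈ T, Set.Ioo (x i) (x i + w i)) ⊆ Set.Icc (0 : ℝ) 1 := by
    intro y hy
    simp only [Set.mem_iUnion] at hy
    obtain ⟨i, hi, hyi⟩ := hy
    exact ⟨le_trans (hx i hi).1 hyi.1.le, le_trans hyi.2.le (hx i hi).2⟩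
  have hble : ∑ i ∈ T, volume (Set.Ioo (x i) (x i + w i)) ≤ 1 := by
    rw [← hmeas]
    calc volume (⋃ i ∈ T, Set.Ioo (x i) (x i + w i)) ≤ volume (Set.Icc (0 : ℝ) 1) :=
          measure_mono hsub
      _ = 1 := by simp
  have hvol : ∀ i, volume (Set.Ioo (x i) (x i + w i)) = ENNReal.ofReal (w i) := by
    intro i; rw [Real.volume_Ioo]; ring_nf
  rw [Finset.sum_congr rfl (fun i _ => hvol i)] at hble
  rw [← ENNReal.ofReal_sum_of_nonneg (fun i _ => (hw i).le)] at hble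
  exact (ENNReal.ofReal_le_one).mp hble

/-- If axis-parallel squares with side lengths `s₁, …, sₙ` are packed in
the unit square and each touches its frontier, then `∑ sᵢ ≤ 4`. -/
theorem squares_touching_unit_square_boundary_sum_le_four
    (n : ℕ) (a b s : Fin n → ℝ)
    (hs : ∀ i, 0 < s i)
    (hsub : ∀ i, axisSquare (a i) (b i) (s i) ⊆ unitSquare)
    (hdisj : ∀ i j, i ≠ j →
      Disjoint (interior (axisSquare (a i) (b i) (s i)))
               (interior (axisSquare (a j) (b j) (s j))))
    (htouch : ∀ i, (axisSquare (a i) (b i) (s i) ∩ frontier unitSquare).Nonempty) :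
    ∑ i, s i ≤ 4 := by
  classical
  -- bounds from containment
  have hbounds : ∀ i, 0 ≤ a i ∧ a i + s i ≤ 1 ∧ 0 ≤ b i ∧ b i + s i ≤ 1 := by
    intro i
    have hc1 : sqPt (a i) (b i) ∈ axisSquare (a i) (b i) (s i) := by
      constructor <;> simp [sqPt_zero, sqPt_one, (hs i).le]
    have hc2 : sqPt (a i + s i) (b i + s i) ∈ axisSquare (a i) (b i) (s i) := by
      constructor <;> simp [sqPt_zero, sqPt_one, (hs i).le]
    have h1 := hsub i hc1
    have h2 := hsub i hc2
    simp only [unitSquare, axisSquare, Set.mem_setOf_eq, Set.mem_Icc, sqPt_zero, sqPt_one,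
      zero_add] at h1 h2
    exact ⟨h1.1.1, h2.1.2, h1.2.1, h2.2.2⟩
  -- each square touches one of the 4 sides
  have hside : ∀ i, b i = 0 ∨ b i + s i = 1 ∨ a i = 0 ∨ a i + s i = 1 := by
    intro i
    obtain ⟨p, hpS, hpF⟩ := htouch i
    have hpU : p ∈ unitSquare := hsub i hpS
    rw [frontier, Set.mem_diff] at hpF
    have hpnI : p ∉ interior unitSquare := hpF.2
    have hpU' : p 0 ∈ Set.Icc (0:ℝ) (0+1) ∧ p 1 ∈ Set.Icc (0:ℝ) (0+1) := hpU
    have hcase : p 0 = 0 ∨ p 0 = 1 ∨ p 1 = 0 ∨ p 1 = 1 := by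
      by_contra hcon
      push_neg at hcon
      obtain ⟨h00, h01, h10, h11⟩ := hcon
      apply hpnI
      apply mem_interior_axisSquare
      · exact ⟨lt_of_le_of_ne hpU'.1.1 (Ne.symm h00), by
          have := hpU'.1.2; rw [zero_add] at this ⊢; exact lt_of_le_of_ne this h01⟩
      · exact ⟨lt_of_le_of_ne hpU'.2.1 (Ne.symm h10), by
          have := hpU'.2.2; rw [zero_add] at this ⊢; exact lt_of_le_of_ne this h11⟩
    obtain ⟨hpS0, hpS1⟩ := hpS
    obtain ⟨hbi, hbsi, hai, hasi⟩ := hbounds i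
    rcases hcase with h | h | h | h
    · right; right; left; linarith [hpS0.1]
    · right; right; right; linarith [hpS0.2]
    · left; linarith [hpS1.1]
    · right; left; linarith [hpS1.2]
  -- interval disjointness on each side
  -- bottom side (b = 0) / top side (b + s = 1): vertical overlap forces horizontal disjointness
  have keyH : ∀ i j, i ≠ j → (∃ y, y ∈ Set.Ioo (b i) (b i + s i) ∩ Set.Ioo (b j) (b j + s j)) →
      Disjoint (Set.Ioo (a i) (a i + s i)) (Set.Ioo (a j) (a j + s j)) := by
    intro i j hij ⟨y, hyi, hyj⟩
    rw [Set.disjoint_left]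
    intro x hxi hxj
    have h1 : sqPt x y ∈ interior (axisSquare (a i) (b i) (s i)) :=
      mem_interior_axisSquare (by rw [sqPt_zero]; exact hxi) (by rw [sqPt_one]; exact hyi)
    have h2 : sqPt x y ∈ interior (axisSquare (a j) (b j) (s j)) :=
      mem_interior_axisSquare (by rw [sqPt_zero]; exact hxj) (by rw [sqPt_one]; exact hyj)
    exact Set.disjoint_left.mp (hdisj i j hij) h1 h2
  have keyV : ∀ i j, i ≠ j → (∃ y, y ∈ Set.Ioo (a i) (a i + s i) ∩ Set.Ioo (a j) (a j + s j)) →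
      Disjoint (Set.Ioo (b i) (b i + s i)) (Set.Ioo (b j) (b j + s j)) := by
    intro i j hij ⟨y, hyi, hyj⟩
    rw [Set.disjoint_left]
    intro x hxi hxj
    have h1 : sqPt y x ∈ interior (axisSquare (a i) (b i) (s i)) :=
      mem_interior_axisSquare (by rw [sqPt_zero]; exact hyi) (by rw [sqPt_one]; exact hxi)
    have h2 : sqPt y x ∈ interior (axisSquare (a j) (b j) (s j)) :=
      mem_interior_axisSquare (by rw [sqPt_zero]; exact hyj) (by rw [sqPt_one]; exact hxj)
    exact Set.disjoint_left.mp (hdisj i j hij) h1 h2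
  -- the four classes
  set C1 : Finset (Fin n) := Finset.univ.filter (fun i => b i = 0) with hC1
  set C2 : Finset (Fin n) := Finset.univ.filter (fun i => b i + s i = 1) with hC2
  set C3 : Finset (Fin n) := Finset.univ.filter (fun i => a i = 0) with hC3
  set C4 : Finset (Fin n) := Finset.univ.filter (fun i => a i + s i = 1) with hC4
  have hmin : ∀ i j : Fin n, 0 < min (s i) (s j) ∧ min (s i) (s j) ≤ s i ∧
      min (s i) (s j) ≤ s j := fun i j => ⟨lt_min (hs i) (hs j), min_le_left _ _, min_le_right _ _⟩
  have hS1 : ∑ i ∈ C1, s i ≤ 1 := by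
    apply interval_sum_le_one C1 a s hs (fun i _ => ⟨(hbounds i).1, (hbounds i).2.1⟩)
    intro i hi j hj hij
    rw [hC1, Finset.mem_filter] at hi hj
    obtain ⟨m0, m1, m2⟩ := hmin i j
    exact keyH i j hij ⟨min (s i) (s j) / 2,
      ⟨by linarith [hi.2], by linarith [hi.2]⟩, ⟨by linarith [hj.2], by linarith [hj.2]⟩⟩
  have hS2 : ∑ i ∈ C2, s i ≤ 1 := by
    apply interval_sum_le_one C2 a s hs (fun i _ => ⟨(hbounds i).1, (hbounds i).2.1⟩)
    intro i hi j hj hij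
    rw [hC2, Finset.mem_filter] at hi hj
    obtain ⟨m0, m1, m2⟩ := hmin i j
    exact keyH i j hij ⟨1 - min (s i) (s j) / 2,
      ⟨by linarith [hi.2], by linarith [hi.2]⟩, ⟨by linarith [hj.2], by linarith [hj.2]⟩⟩
  have hS3 : ∑ i ∈ C3, s i ≤ 1 := by
    apply interval_sum_le_one C3 b s hs (fun i _ => ⟨(hbounds i).2.2.1, (hbounds i).2.2.2⟩)
    intro i hi j hj hij
    rw [hC3, Finset.mem_filter] at hi hj
    obtain ⟨m0, m1, m2⟩ := hmin i j
    exact keyV i j hij ⟨min (s i) (s j) / 2,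
      ⟨by linarith [hi.2], by linarith [hi.2]⟩, ⟨by linarith [hj.2], by linarith [hj.2]⟩⟩
  have hS4 : ∑ i ∈ C4, s i ≤ 1 := by
    apply interval_sum_le_one C4 b s hs (fun i _ => ⟨(hbounds i).2.2.1, (hbounds i).2.2.2⟩)
    intro i hi j hj hij
    rw [hC4, Finset.mem_filter] at hi hj
    obtain ⟨m0, m1, m2⟩ := hmin i j
    exact keyV i j hij ⟨1 - min (s i) (s j) / 2,
      ⟨by linarith [hi.2], by linarith [hi.2]⟩, ⟨by linarith [hj.2], by linarith [hj.2]⟩⟩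
  -- combine: each i is in at least one class
  have hcover : ∀ i : Fin n, s i ≤
      (if b i = 0 then s i else 0) + (if b i + s i = 1 then s i else 0) +
      (if a i = 0 then s i else 0) + (if a i + s i = 1 then s i else 0) := by
    intro i
    rcases hside i with h | h | h | h <;>
      · simp only [h, if_true]
        have := hs i
        split_ifs <;> linarith
  calc ∑ i, s i ≤ ∑ i, ((if b i = 0 then s i else 0) + (if b i + s i = 1 then s i else 0) +
        (if a i = 0 then s i else 0) + (if a i + s i = 1 then s i else 0)) :=
        Finset.sum_le_sum (fun i _ => hcover i)
    _ = (∑ i ∈ C1, s i) + (∑ i ∈ C2, s i) + (∑ i ∈ C3, s i) + (∑ i ∈ C4, s i) := by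
        simp only [Finset.sum_add_distrib, hC1, hC2, hC3, hC4, Finset.sum_filter]
    _ ≤ 1 + 1 + 1 + 1 := by gcongr
    _ = 4 := by norm_num
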